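/- arXiv:1309.2050 — 2 statements merged into one kernel-verified Lean document; each statement's English description precedes it below -/
import Mathlib

section
/- Let D and E be d×d matrices over a commutative ring R and L ⊆ R an ideal. Suppose: (1) every entry of D lies in L, (2) the entries of the last column of D lie in L², (3) E has rank at most r in the sense that all (r+1)×(r+1) minors of E vanish, and (4) the entries of the last column of E lie in L. Then det(D + E) ∈ L^{d-r+1}. -/
open Matrix

/-- Minors of any size `≥ r+1` of `E` vanish, given all `(r+1)`-minors vanish. -/
lemma aux_minor_zero {R : Type*} [CommRing R] {d r : ℕ} (E : Matrix (Fin d) (Fin d) R)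
    (hE : ∀ f g : Fin (r + 1) → Fin d, (E.submatrix f g).det = 0) :
    ∀ k, r + 1 ≤ k → ∀ f g : Fin k → Fin d, (E.submatrix f g).det = 0 := by
  intro k hk
  induction k, hk using Nat.le_induction with
  | base => exact hE
  | succ k hk IH =>
    intro f g
    rw [Matrix.det_succ_row_zero]
    apply Finset.sum_eq_zero
    intro j _
    rw [Matrix.submatrix_submatrix, IH]
    ring

/-- If `r+1` rows of a square matrix `A` are (selections from) columns of `E`,
then `det A = 0`. -/
lemma aux_det_zero {R : Type*} [CommRing R] {d r : ℕ} (E : Matrix (Fin d) (Fin d) R)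
    (hE : ∀ f g : Fin (r + 1) → Fin d, (E.submatrix f g).det = 0) :
    ∀ n (A : Matrix (Fin n) (Fin n) R) (T : Finset (Fin n)) (g b : Fin n → Fin d),
      r + 1 ≤ T.card → (∀ i ∈ T, ∀ j, A i j = E (g j) (b i)) → A.det = 0 := by
  intro n
  induction n using Nat.strong_induction_on with
  | _ n IH =>
    intro A T g b hT hA
    by_cases hTu : T = Finset.univ
    · have hn : r + 1 ≤ n := by
        have := hT
        rw [hTu, Finset.card_univ, Fintype.card_fin] at this
        exact this
      have hAe : A = (E.submatrix g b)ᵀ := by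
        ext i j
        simp only [Matrix.transpose_apply, Matrix.submatrix_apply]
        exact hA i (by simp [hTu]) j
      rw [hAe, Matrix.det_transpose]
      exact aux_minor_zero E hE n hn g b
    · obtain ⟨i₀, hi₀⟩ : ∃ i₀, i₀ ∉ T := by
        by_contra h
        push_neg at h
        exact hTu (Finset.eq_univ_iff_forall.2 h)
      cases n with
      | zero => exact i₀.elim0
      | succ m =>
        rw [Matrix.det_succ_row A i₀]
        apply Finset.sum_eq_zero
        intro j _
        have hinj : Function.Injective i₀.succAbove := Fin.succAbove_right_injective
        set T' : Finset (Fin m) := T.preimage i₀.succAbove hinj.injOn with hT'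
        have himg : T'.image i₀.succAbove = T := by
          ext t
          simp only [Finset.mem_image, hT', Finset.mem_preimage]
          constructor
          · rintro ⟨k, hk, rfl⟩; exact hk
          · intro ht
            have hne : t ≠ i₀ := fun h => hi₀ (h ▸ ht)
            obtain ⟨z, hz⟩ := Fin.exists_succAbove_eq hne
            exact ⟨z, by rw [hz]; exact ht, hz⟩
        have hcard : r + 1 ≤ T'.card := by
          have : T'.card = T.card := by
            rw [← himg, Finset.card_image_of_injective _ hinj]
          omega
        have h0 : (A.submatrix i₀.succAbove j.succAbove).det = 0 := by
          apply IH m (Nat.lt_succ_self m) _ T' (g ∘ j.succAbove) (b ∘ i₀.succAbove) hcard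
          intro k hk l
          simp only [Matrix.submatrix_apply, Function.comp]
          exact hA _ (Finset.mem_preimage.1 hk) _
        rw [h0, mul_zero]

lemma aux_prod_mem_pow {R : Type*} [CommRing R] {ι : Type*} (L : Ideal R)
    (s : Finset ι) (f : ι → R) (w : ι → ℕ) (h : ∀ i ∈ s, f i ∈ L ^ w i) :
    ∏ i ∈ s, f i ∈ L ^ (∑ i ∈ s, w i) := by
  classical
  induction s using Finset.cons_induction with
  | empty => simp [Ideal.one_eq_top]
  | cons a s ha IH =>
    rw [Finset.prod_cons, Finset.sum_cons, pow_add]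
    exact Ideal.mul_mem_mul (h a (Finset.mem_cons_self a s))
      (IH fun i hi => h i (Finset.mem_cons_of_mem hi))

/-- The key determinantal containment: if every entry of `D` lies in an ideal `L`,
the last column of `D` has entries in `L²`, all `(r+1) × (r+1)` minors of `E`
vanish, and the last column of `E` has entries in `L`, then
`det (D + E) ∈ L^(d - r + 1)`. -/
theorem det_add_mem_pow_ideal {R : Type*} [CommRing R] {d r : ℕ} (hrd : r < d)
    (L : Ideal R) (D E : Matrix (Fin d) (Fin d) R)
    (hD : ∀ i j, D i j ∈ L)
    (hDlast : ∀ i, D i ⟨d - 1, by omega⟩ ∈ L ^ 2)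
    (hE : ∀ rr cc : Fin (r + 1) → Fin d, (E.submatrix rr cc).det = 0)
    (hElast : ∀ i, E i ⟨d - 1, by omega⟩ ∈ L) :
    (D + E).det ∈ L ^ (d - r + 1) := by
  classical
  set last : Fin d := ⟨d - 1, by omega⟩ with hlast
  rw [← Matrix.det_transpose, Matrix.transpose_add]
  have key : (Dᵀ + Eᵀ).det
      = ∑ s : Finset (Fin d), Matrix.detRowAlternating (s.piecewise (fun i => Dᵀ i) (fun i => Eᵀ i)) :=
    (Matrix.detRowAlternating).toMultilinearMap.map_add_univ (fun i => Dᵀ i) (fun i => Eᵀ i)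
  rw [key]
  apply Ideal.sum_mem
  intro s _
  have hterm : Matrix.detRowAlternating (s.piecewise (fun i => Dᵀ i) (fun i => Eᵀ i))
      = (Matrix.of (s.piecewise (fun i => Dᵀ i) (fun i => Eᵀ i))).det := rfl
  rw [hterm]
  set A : Matrix (Fin d) (Fin d) R := Matrix.of (s.piecewise (fun i => Dᵀ i) (fun i => Eᵀ i)) with hA
  have hApp : ∀ i j, A i j = if i ∈ s then D j i else E j i := by
    intro i j
    by_cases hi : i ∈ s
    · simp [hA, Finset.piecewise_eq_of_mem _ _ _ hi, hi]
    · simp [hA, Finset.piecewise_eq_of_notMem _ _ _ hi, hi]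
  by_cases hc : d - r ≤ s.card
  · -- membership case via Leibniz
    rw [Matrix.det_apply]
    apply Ideal.sum_mem
    intro σ _
    set w : Fin d → ℕ := fun i =>
      (if σ i ∈ s then 1 else 0) + (if σ i = last then 1 else 0) with hw
    have hmem : ∀ i ∈ Finset.univ, A (σ i) i ∈ L ^ w i := by
      intro i _
      rw [hApp]
      by_cases h1 : σ i ∈ s <;> by_cases h2 : σ i = last
      · have hwi : w i = 2 := by simp only [hw, if_pos h1, if_pos h2]
        rw [if_pos h1, h2, hwi]; exact hDlast i
      · have hwi : w i = 1 := by simp only [hw, if_pos h1, if_neg h2]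
        rw [if_pos h1, hwi, pow_one]; exact hD i (σ i)
      · have hwi : w i = 1 := by simp only [hw, if_neg h1, if_pos h2]
        rw [if_neg h1, h2, hwi, pow_one]; exact hElast i
      · have hwi : w i = 0 := by simp only [hw, if_neg h1, if_neg h2]
        rw [hwi, pow_zero, Ideal.one_eq_top]; exact Submodule.mem_top
    have hprod := aux_prod_mem_pow L Finset.univ (fun i => A (σ i) i) w hmem
    have hsum : ∑ i, w i = s.card + 1 := by
      have h1 : ∑ i : Fin d, (if σ i ∈ s then (1:ℕ) else 0)
          = ∑ j : Fin d, (if j ∈ s then (1:ℕ) else 0) :=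
        Equiv.sum_comp σ fun j => if j ∈ s then (1:ℕ) else 0
      have h2 : ∑ j : Fin d, (if j ∈ s then (1:ℕ) else 0) = s.card := by
        rw [Finset.sum_ite_mem, Finset.univ_inter, Finset.sum_const, smul_eq_mul, mul_one]
      have h3 : ∑ i : Fin d, (if σ i = last then (1:ℕ) else 0)
          = ∑ j : Fin d, (if j = last then (1:ℕ) else 0) :=
        Equiv.sum_comp σ fun j => if j = last then (1:ℕ) else 0
      have h4 : ∑ j : Fin d, (if j = last then (1:ℕ) else 0) = 1 := by
        simp
      rw [hw]
      rw [Finset.sum_add_distrib, h1, h2, h3, h4]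
    rw [hsum] at hprod
    have hle : L ^ (s.card + 1) ≤ L ^ (d - r + 1) :=
      Ideal.pow_le_pow_right (by omega)
    have hP : ∏ i, A (σ i) i ∈ L ^ (d - r + 1) := hle hprod
    rcases Int.units_eq_one_or (Equiv.Perm.sign σ) with h | h <;> rw [h]
    · simpa using hP
    · simpa using (L ^ (d - r + 1)).neg_mem hP
  · -- zero case: at least r+1 rows come from columns of E
    push_neg at hc
    have hcardc : r + 1 ≤ sᶜ.card := by
      have := Finset.card_compl s
      rw [Fintype.card_fin] at this
      have hcle : s.card ≤ d := by
        have := Finset.card_le_univ s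
        simpa using this
      omega
    have h0 : A.det = 0 := by
      apply aux_det_zero E hE d A sᶜ id id hcardc
      intro i hi j
      rw [hApp]
      rw [Finset.mem_compl] at hi
      simp [hi]
    rw [h0]
    exact Ideal.zero_mem _
end

section
/- Let R be a Noetherian ring, I an ideal containing a nonzerodivisor a, with J = (a) ⊆ I principal, and suppose I^t :_{Q(R)} I^u = I^{t-u} holds in the total ring of quotients for given u ≤ t. Then (J·I^t) :_R I^u ⊆ J·I^{t-u}, i.e., the colon ideal (aI^t : I^u) in R is contained in aI^{t-u}. -/
/-- If `a ∈ I` is a nonzerodivisor and `I^t :_{Q(R)} I^u = I^(t-u)` in the total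
quotient ring, then in `R` the colon ideal satisfies `(a·I^t) :_R I^u ⊆ a·I^(t-u)`. -/
theorem colon_ideal_contained {R : Type*} [CommRing R] [IsNoetherianRing R]
    (I : Ideal R) (a : R) (ha : a ∈ I) (hreg : a ∈ nonZeroDivisors R)
    (u t : ℕ) (hut : u ≤ t)
    (hcolon : {q : FractionRing R | ∀ x ∈ I ^ u, q * algebraMap R (FractionRing R) x ∈
        Submodule.map (Algebra.linearMap R (FractionRing R)) (I ^ t : Submodule R R)}
      = ↑(Submodule.map (Algebra.linearMap R (FractionRing R))
          (I ^ (t - u) : Submodule R R))) :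
    (Ideal.span {a} * I ^ t).colon ((I ^ u : Ideal R) : Set R) ≤ Ideal.span {a} * I ^ (t - u) := by
  intro r hr
  rw [Submodule.mem_colon] at hr
  set K := FractionRing R
  set f := algebraMap R K with hf
  have hu : IsUnit (f a) := IsLocalization.map_units K ⟨a, hreg⟩
  set q : K := (hu.unit⁻¹ : Kˣ) * f r with hqdef
  have hq : q ∈ {q : K | ∀ x ∈ I ^ u, q * f x ∈
      Submodule.map (Algebra.linearMap R K) (I ^ t : Submodule R R)} := by
    intro x hx
    obtain ⟨m, hm, hma⟩ := Ideal.mem_span_singleton_mul.mp (hr x hx)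
    refine ⟨m, hm, ?_⟩
    have h1 : f a * f m = f r * f x := by
      rw [← map_mul, ← map_mul, hma, smul_eq_mul]
    show f m = q * f x
    calc f m = (hu.unit⁻¹ : Kˣ) * (f a * f m) := by
          rw [← mul_assoc, IsUnit.val_inv_mul, one_mul]
      _ = (hu.unit⁻¹ : Kˣ) * (f r * f x) := by rw [h1]
      _ = q * f x := by rw [hqdef, mul_assoc]
  rw [hcolon] at hq
  obtain ⟨s, hs, hsq⟩ := hq
  have hfr : f (a * s) = f r := by
    have : f s = q := hsq
    rw [map_mul, this, hqdef, ← mul_assoc, IsUnit.mul_val_inv, one_mul]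
  have hras : a * s = r := IsFractionRing.injective R K hfr
  exact Ideal.mem_span_singleton_mul.mpr ⟨s, hs, hras⟩
end
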